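/- Let d ≥ 2 be an integer. Then the function W^(d) is constant on the interval (0,1] and strictly decreasing on the interval [1,∞). -/

import Mathlib

open MeasureTheory Filter

/-- The limiting profile `U`. -/
noncomputable def U (r : ℝ) : ℝ :=
  if r ≤ 1 then 1 / 2 else 1 / 2 - Real.arccos (1 / r) / Real.pi

/-- The `d`-dimensional profile `U^(d)`. -/
noncomputable def Ud (d : ℕ) (r : ℝ) : ℝ :=
  U r - ((d : ℝ) - 2) * ∫ t in Set.Ioi (1:ℝ), U (t * r) * t ^ ((1:ℝ) - d)

/-- The volume of the unit sphere `S^{d-1}` in `ℝ^d`. -/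
noncomputable def volSphere (d : ℕ) : ℝ :=
  2 * Real.pi ^ ((d : ℝ) / 2) / Real.Gamma ((d : ℝ) / 2)

/-- The `d`-dimensional Shannon density profile `W^(d)`. -/
noncomputable def Wd (d : ℕ) (r : ℝ) : ℝ :=
  (2 / (Real.Gamma ((d : ℝ) - 1) * volSphere d)) * r ^ (-(d : ℝ)) *
    ∫ t in (0:ℝ)..r, Ud d t * t


open Set intervalIntegral Real

noncomputable def Ksin (d : ℕ) (x : ℝ) : ℝ := ∫ θ in (0:ℝ)..x, (Real.sin θ) ^ (d - 2)

lemma hasDerivAt_Ksin (d : ℕ) (x : ℝ) : HasDerivAt (Ksin d) (Real.sin x ^ (d - 2)) x := by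
  have hc : Continuous fun θ : ℝ => Real.sin θ ^ (d - 2) := Real.continuous_sin.pow _
  exact intervalIntegral.integral_hasDerivAt_right (hc.intervalIntegrable _ _)
    (hc.stronglyMeasurableAtFilter _ _) hc.continuousAt

lemma continuous_Ksin (d : ℕ) : Continuous (Ksin d) := by
  have : ∀ x, HasDerivAt (Ksin d) (Real.sin x ^ (d - 2)) x := hasDerivAt_Ksin d
  exact continuous_iff_continuousAt.2 fun x => (this x).continuousAt

lemma Ksin_zero (d : ℕ) : Ksin d 0 = 0 := by simp [Ksin]

lemma U_of_le {r : ℝ} (h : r ≤ 1) : U r = 1 / 2 := if_pos h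

lemma U_of_ge {r : ℝ} (h : 1 ≤ r) : U r = Real.arcsin (1 / r) / Real.pi := by
  rcases eq_or_lt_of_le h with rfl | h1
  · simp [U, Real.arcsin_one]
    field_simp
  · rw [U, if_neg (not_le.2 h1), Real.arccos, sub_div]
    have : Real.pi ≠ 0 := Real.pi_ne_zero
    field_simp
    ring

lemma abs_U_le (r : ℝ) : |U r| ≤ 1 / 2 := by
  unfold U
  split
  · rw [abs_of_nonneg] <;> norm_num
  · rw [abs_le]
    have h1 := Real.arccos_nonneg (1 / r)
    have h2 := Real.arccos_le_pi (1 / r)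
    have hp := Real.pi_pos
    constructor
    · have : Real.arccos (1 / r) / Real.pi ≤ 1 := by
        rw [div_le_one hp]; exact h2
      linarith
    · have : 0 ≤ Real.arccos (1 / r) / Real.pi := div_nonneg h1 hp.le
      linarith

lemma measurable_U : Measurable U := by
  unfold U
  apply Measurable.ite measurableSet_Iic measurable_const
  apply Measurable.sub measurable_const
  exact (Real.continuous_arccos.measurable.comp (measurable_const.div measurable_id)).div_const _

lemma Ksin_two (x : ℝ) : Ksin 2 x = x := by simp [Ksin]

lemma integrableOn_U_mul_rpow (k : ℕ) (hk : 1 ≤ k) (r : ℝ) {b : ℝ} (hb0 : 0 < b) :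
    IntegrableOn (fun t : ℝ => U (t * r) * t ^ (-(k+1) : ℝ)) (Set.Ioi b) := by
  apply Integrable.mono' (g := fun t : ℝ => 1 / 2 * t ^ (-(k+1) : ℝ))
  · apply Integrable.const_mul
    refine integrableOn_Ioi_rpow_of_lt ?_ hb0
    have : (1:ℝ) ≤ (k:ℝ) := by exact_mod_cast hk
    linarith
  · apply AEStronglyMeasurable.mul
    · exact (measurable_U.comp (measurable_id.mul_const r)).aestronglyMeasurable
    · refine ContinuousOn.aestronglyMeasurable ?_ measurableSet_Ioi
      intro x hx
      exact (Real.continuousAt_rpow_const x _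
        (Or.inl (ne_of_gt (lt_trans hb0 hx)))).continuousWithinAt
  · filter_upwards [ae_restrict_mem measurableSet_Ioi] with t ht
    have ht0 : 0 < t := lt_trans hb0 ht
    have hrp : 0 ≤ t ^ (-(k+1) : ℝ) := Real.rpow_nonneg ht0.le _
    simp only [norm_mul, Real.norm_eq_abs]
    rw [abs_of_nonneg hrp]
    exact mul_le_mul_of_nonneg_right (abs_U_le (t * r)) hrp


lemma keyIoi (k : ℕ) {r b : ℝ} (hr : 0 < r) (hb : 1 ≤ b) (hbr : 1 ≤ b * r) :
    (k : ℝ) * ∫ t in Set.Ioi b, U (t * r) * t ^ (-(k+1) : ℝ) =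
      (Real.arcsin (1 / (b * r)) / b ^ k -
        r ^ k * Ksin (k + 2) (Real.arcsin (1 / (b * r)))) / Real.pi := by
  rcases k with _ | m
  · simp [Ksin_two]
  set k := m + 1 with hkdef
  have hk : 1 ≤ k := Nat.le_add_left 1 m
  have hb0 : 0 < b := lt_of_lt_of_le one_pos hb
  set Φ : ℝ → ℝ := fun t =>
    (r ^ k * Ksin (k + 2) (Real.arcsin (1 / (t * r))) - Real.arcsin (1 / (t * r)) / t ^ k) /
      Real.pi with hΦdef
  set f' : ℝ → ℝ := fun t => (k : ℝ) * (U (t * r) * t ^ (-(k+1) : ℝ)) with hf'def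
  have hderiv : ∀ t ∈ Set.Ioi b, HasDerivAt Φ (f' t) t := by
    intro t ht
    have ht1 : 1 < t := lt_of_le_of_lt hb ht
    have ht0 : 0 < t := lt_trans one_pos ht1
    have htr1 : 1 < t * r := lt_of_le_of_lt hbr (mul_lt_mul_of_pos_right ht hr)
    have htr0 : 0 < t * r := lt_trans one_pos htr1
    have hx0 : 0 < 1 / (t * r) := by positivity
    have hx1 : 1 / (t * r) < 1 := by rw [div_lt_one htr0]; exact htr1
    have hs0 : 0 < Real.sqrt (1 - (1 / (t * r)) ^ 2) := by
      apply Real.sqrt_pos.2; nlinarith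
    have ha : HasDerivAt (fun t : ℝ => 1 / (t * r)) (-(1 * r / (t * r) ^ 2)) t := by
      have := ((hasDerivAt_id t).mul_const r).inv (ne_of_gt htr0)
      simp only [id_eq, one_mul] at this
      simp only [one_div, one_mul]
      refine this.congr_deriv ?_
      ring
    have harc : HasDerivAt (fun t : ℝ => Real.arcsin (1 / (t * r)))
        (1 / Real.sqrt (1 - (1 / (t * r)) ^ 2) * -(1 * r / (t * r) ^ 2)) t :=
      by have := (Real.hasDerivAt_arcsin (x := 1 / (t * r)) (by linarith) (ne_of_lt hx1)).comp t ha; exact this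
    have hKc : HasDerivAt (fun t : ℝ => Ksin (k + 2) (Real.arcsin (1 / (t * r))))
        ((1 / (t * r)) ^ k * (1 / Real.sqrt (1 - (1 / (t * r)) ^ 2) * -(1 * r / (t * r) ^ 2)))
        t := by
      have h := (hasDerivAt_Ksin (k + 2) (Real.arcsin (1 / (t * r)))).comp t harc
      have hsa : Real.sin (Real.arcsin (1 / (t * r))) = 1 / (t * r) :=
        Real.sin_arcsin (by linarith) hx1.le
      have hkk : k + 2 - 2 = k := rfl
      rw [hkk, hsa] at h
      exact h
    have hpow : HasDerivAt (fun t : ℝ => t ^ k) ((k : ℝ) * t ^ (k - 1)) t := hasDerivAt_pow k t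
    have hΦ' := ((hKc.const_mul ((r : ℝ) ^ k)).sub
      (harc.div hpow (by positivity))).div_const Real.pi
    refine hΦ'.congr_deriv ?_
    have hsa : Real.sin (Real.arcsin (1 / (t * r))) = 1 / (t * r) :=
      Real.sin_arcsin (by linarith) hx1.le
    rw [hf'def]
    simp only []
    rw [U_of_ge htr1.le]
    have hrp : t ^ (-(k+1) : ℝ) = (t ^ (k + 1 : ℕ))⁻¹ := by
      rw [← Real.rpow_natCast t (k + 1), ← Real.rpow_neg ht0.le]
      norm_num
    rw [hrp]
    have hkm : k - 1 = m := rfl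
    rw [hkm, hkdef]
    have hπ : Real.pi ≠ 0 := Real.pi_ne_zero
    set s := Real.sqrt (1 - (1 / (t * r)) ^ 2) with hs
    simp only [div_pow, one_pow]
    field_simp [hπ, ht0.ne', hr.ne', hs0.ne']
    ring
  have hcont : ContinuousWithinAt Φ (Set.Ici b) b := by
    apply ContinuousAt.continuousWithinAt
    have hinner : ContinuousAt (fun t : ℝ => Real.arcsin (1 / (t * r))) b := by
      apply Real.continuous_arcsin.continuousAt.comp
      exact (continuousAt_const.div (continuousAt_id.mul continuousAt_const)
        (by positivity : b * r ≠ 0))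
    apply ContinuousAt.div _ continuousAt_const Real.pi_ne_zero
    apply ContinuousAt.sub
    · exact continuousAt_const.mul ((continuous_Ksin (k + 2)).continuousAt.comp hinner)
    · exact hinner.div (continuousAt_pow b k) (by positivity)
  have htend : Tendsto Φ atTop (nhds 0) := by
    have h1 : Tendsto (fun t : ℝ => 1 / (t * r)) atTop (nhds 0) := by
      simp only [one_div]
      exact (tendsto_id.atTop_mul_const hr).inv_tendsto_atTop
    have harc0 : Tendsto (fun t : ℝ => Real.arcsin (1 / (t * r))) atTop (nhds 0) := by
      have := (Real.continuous_arcsin.tendsto 0).comp h1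
      simpa [Function.comp_def] using this
    have hK0 : Tendsto (fun t : ℝ => Ksin (k + 2) (Real.arcsin (1 / (t * r)))) atTop
        (nhds 0) := by
      have := ((continuous_Ksin (k + 2)).tendsto 0).comp harc0
      simpa [Ksin_zero, Function.comp_def] using this
    have hinv : Tendsto (fun t : ℝ => (t ^ k)⁻¹) atTop (nhds 0) := by
      apply tendsto_inv_atTop_zero.comp
      exact tendsto_pow_atTop (by omega : k ≠ 0)
    have h2 : Tendsto (fun t : ℝ => Real.arcsin (1 / (t * r)) / t ^ k) atTop (nhds 0) := by
      simp only [div_eq_mul_inv]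
      simpa using harc0.mul hinv
    have := ((hK0.const_mul ((r:ℝ) ^ k)).sub h2).div_const Real.pi
    simp only [mul_zero, sub_zero, zero_div] at this
    exact this
  have hint : IntegrableOn f' (Set.Ioi b) := by
    exact (integrableOn_U_mul_rpow k hk r hb0).const_mul _
  have := integral_Ioi_of_hasDerivAt_of_tendsto hcont hderiv hint htend
  rw [MeasureTheory.integral_const_mul] at this
  rw [this]
  rw [hΦdef]
  simp only []
  ring

lemma Ud_of_ge {d : ℕ} (hd : 2 ≤ d) {r : ℝ} (hr : 1 ≤ r) :
    Ud d r = r ^ (d - 2) * Ksin d (Real.arcsin (1 / r)) / Real.pi := by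
  obtain ⟨k, rfl⟩ : ∃ k, d = k + 2 := ⟨d - 2, by omega⟩
  have hr0 : 0 < r := lt_of_lt_of_le one_pos hr
  have hkey := keyIoi k hr0 le_rfl (by simpa using hr)
  simp only [one_mul, one_pow, div_one] at hkey
  rw [Ud]
  have he : (1:ℝ) - ((k+2:ℕ):ℝ) = -((k:ℝ)+1) := by push_cast; ring
  simp only [he]
  have hc : ((k+2:ℕ):ℝ) - 2 = (k:ℝ) := by push_cast; ring
  rw [hc, hkey, U_of_ge hr]
  have hkk : k + 2 - 2 = k := rfl
  rw [hkk]
  ring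

lemma Ud_of_le {d : ℕ} (hd : 2 ≤ d) {r : ℝ} (hr0 : 0 < r) (hr : r ≤ 1) :
    Ud d r = r ^ (d - 2) * Ksin d (Real.pi / 2) / Real.pi := by
  obtain ⟨k, rfl⟩ : ∃ k, d = k + 2 := ⟨d - 2, by omega⟩
  have hπ : Real.pi ≠ 0 := Real.pi_ne_zero
  rcases Nat.eq_zero_or_pos k with rfl | hk
  · rw [Ud, U_of_le hr]
    norm_num [Ksin_two]
    field_simp
  set c : ℝ := 1 / r with hcdef
  have hc1 : 1 ≤ c := (le_div_iff₀ hr0).2 (by linarith)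
  have hcr : c * r = 1 := by rw [hcdef]; field_simp
  have he : (1:ℝ) - ((k+2:ℕ):ℝ) = -((k:ℝ)+1) := by push_cast; ring
  have hc2 : ((k+2:ℕ):ℝ) - 2 = (k:ℝ) := by push_cast; ring
  have hI := integrableOn_U_mul_rpow k hk r one_pos
  have hsplit : ∫ t in Set.Ioi (1:ℝ), U (t * r) * t ^ (-(k+1) : ℝ) =
      (∫ t in Set.Ioc 1 c, U (t * r) * t ^ (-(k+1) : ℝ)) +
      ∫ t in Set.Ioi c, U (t * r) * t ^ (-(k+1) : ℝ) := by
    rw [← Set.Ioc_union_Ioi_eq_Ioi hc1]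
    exact MeasureTheory.setIntegral_union (Set.Ioc_disjoint_Ioi le_rfl) measurableSet_Ioi
      (hI.mono_set Set.Ioc_subset_Ioi_self) (hI.mono_set (Set.Ioi_subset_Ioi hc1))
  have hpiece1 : ∫ t in Set.Ioc 1 c, U (t * r) * t ^ (-(k+1) : ℝ) =
      ∫ t in Set.Ioc 1 c, 1 / 2 * t ^ (-(k+1) : ℝ) := by
    apply MeasureTheory.setIntegral_congr_fun measurableSet_Ioc
    intro t ht
    have : t * r ≤ 1 := by
      have := ht.2
      calc t * r ≤ c * r := mul_le_mul_of_nonneg_right this hr0.le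
      _ = 1 := hcr
    simp only [U_of_le this]
  have hval1 : ∫ t in Set.Ioc 1 c, 1 / 2 * t ^ (-(k+1) : ℝ) =
      1 / 2 * ((c ^ (-(k:ℝ)) - 1) / (-(k:ℝ))) := by
    rw [← intervalIntegral.integral_of_le hc1, intervalIntegral.integral_const_mul,
      integral_rpow]
    · norm_num
    · right
      refine ⟨?_, ?_⟩
      · have hk1 : (1:ℝ) ≤ (k:ℝ) := by exact_mod_cast hk
        intro h
        have := neg_injective h
        linarith
      · rw [Set.uIcc_of_le hc1]
        intro h0
        have : (0:ℝ) < 1 := one_pos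
        linarith [h0.1]
  have hkey := keyIoi k hr0 hc1 (le_of_eq hcr.symm)
  rw [hcr, one_div_one, Real.arcsin_one] at hkey
  have hkR : ((k:ℝ)) ≠ 0 := by
    have : (1:ℝ) ≤ (k:ℝ) := by exact_mod_cast hk
    linarith
  have hc3 : c ^ (-(k:ℝ)) = r ^ k := by
    rw [hcdef, one_div, Real.inv_rpow hr0.le, Real.rpow_neg hr0.le, inv_inv,
      Real.rpow_natCast]
  have hc4 : c ^ k = (r ^ k)⁻¹ := by rw [hcdef, one_div, inv_pow]
  rw [Ud, U_of_le hr]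
  simp only [he]
  rw [hc2, hsplit, hpiece1, hval1, mul_add, hkey, hc3, hc4]
  have hkk : k + 2 - 2 = k := rfl
  rw [hkk]
  have hrk : (r:ℝ) ^ k ≠ 0 := pow_ne_zero _ hr0.ne'
  field_simp
  ring

lemma hasDerivAt_arcsin_inv {t : ℝ} (ht : 1 < t) :
    HasDerivAt (fun t : ℝ => Real.arcsin (1 / t)) (-(1 / (t * Real.sqrt (t ^ 2 - 1)))) t := by
  have ht0 : 0 < t := lt_trans one_pos ht
  have hx0 : 0 < 1 / t := by positivity
  have hx1 : 1 / t < 1 := by rw [div_lt_one ht0]; exact ht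
  have hs0 : 0 < Real.sqrt (t ^ 2 - 1) := Real.sqrt_pos.2 (by nlinarith)
  have ha : HasDerivAt (fun t : ℝ => 1 / t) (-(t ^ 2)⁻¹) t := by
    simpa only [one_div] using hasDerivAt_inv (ne_of_gt ht0)
  have harc := (Real.hasDerivAt_arcsin (by linarith) (ne_of_lt hx1)).comp t ha
  refine harc.congr_deriv ?_
  have hsq : Real.sqrt (1 - (1 / t) ^ 2) = Real.sqrt (t ^ 2 - 1) / t := by
    rw [show (1:ℝ) - (1 / t) ^ 2 = (t ^ 2 - 1) / t ^ 2 by field_simp,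
      Real.sqrt_div (by nlinarith) _, Real.sqrt_sq ht0.le]
  rw [hsq]
  field_simp

lemma hasDerivAt_Ksin_arcsin_inv {d : ℕ} {t : ℝ} (ht : 1 < t) :
    HasDerivAt (fun t : ℝ => Ksin d (Real.arcsin (1 / t)))
      (-((1 / t) ^ (d - 2) / (t * Real.sqrt (t ^ 2 - 1)))) t := by
  have ht0 : 0 < t := lt_trans one_pos ht
  have hx0 : 0 < 1 / t := by positivity
  have hx1 : 1 / t < 1 := by rw [div_lt_one ht0]; exact ht
  have h := (hasDerivAt_Ksin d (Real.arcsin (1 / t))).comp t (hasDerivAt_arcsin_inv ht)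
  rw [Real.sin_arcsin (by linarith) hx1.le] at h
  refine h.congr_deriv ?_
  ring

lemma hasDerivAt_sqrt_sq_sub_one {t : ℝ} (ht : 1 < t) :
    HasDerivAt (fun t : ℝ => Real.sqrt (t ^ 2 - 1)) (t / Real.sqrt (t ^ 2 - 1)) t := by
  have hne : t ^ 2 - 1 ≠ 0 := by nlinarith
  have h := (Real.hasDerivAt_sqrt hne).comp t ((hasDerivAt_pow 2 t).sub_const 1)
  refine h.congr_deriv ?_
  rw [pow_one]
  field_simp
  ring

lemma hasDerivAt_H {d : ℕ} (hd : 2 ≤ d) {t : ℝ} (ht : 1 < t) :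
    HasDerivAt (fun t : ℝ => t ^ d * Ksin d (Real.arcsin (1 / t)) + Real.sqrt (t ^ 2 - 1))
      ((d : ℝ) * t ^ (d - 1) * Ksin d (Real.arcsin (1 / t))) t := by
  obtain ⟨k, rfl⟩ : ∃ k, d = k + 2 := ⟨d - 2, by omega⟩
  have ht0 : 0 < t := lt_trans one_pos ht
  have hs0 : 0 < Real.sqrt (t ^ 2 - 1) := Real.sqrt_pos.2 (by nlinarith)
  have h1 := (hasDerivAt_pow (k + 2) t).mul (hasDerivAt_Ksin_arcsin_inv (d := k + 2) ht)
  have h2 := hasDerivAt_sqrt_sq_sub_one ht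
  have h := h1.add h2
  refine h.congr_deriv ?_
  have hkk : k + 2 - 2 = k := rfl
  have hkk1 : k + 2 - 1 = k + 1 := rfl
  rw [hkk, hkk1]
  simp only [div_pow, one_pow]
  field_simp
  ring

lemma pow_sub_helper {d : ℕ} (hd : 2 ≤ d) (t : ℝ) : t ^ (d - 2) * t = t ^ (d - 1) := by
  rw [← pow_succ]
  congr 1
  omega

lemma F_le {d : ℕ} (hd : 2 ≤ d) {r : ℝ} (hr0 : 0 ≤ r) (hr : r ≤ 1) :
    ∫ t in (0:ℝ)..r, Ud d t * t = r ^ d * Ksin d (Real.pi / 2) / (d * Real.pi) := by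
  have hcongr : Set.EqOn (fun t => Ud d t * t)
      (fun t => t ^ (d - 1) * (Ksin d (Real.pi / 2) / Real.pi)) (Set.uIcc 0 r) := by
    intro t htm
    rw [Set.uIcc_of_le hr0] at htm
    rcases eq_or_lt_of_le htm.1 with rfl | ht0
    · simp [zero_pow (by omega : d - 1 ≠ 0)]
    · simp only
      rw [Ud_of_le hd ht0 (le_trans htm.2 hr)]
      rw [show t ^ (d - 2) * Ksin d (Real.pi / 2) / Real.pi * t
          = t ^ (d - 2) * t * (Ksin d (Real.pi / 2) / Real.pi) by ring, pow_sub_helper hd]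
  rw [intervalIntegral.integral_congr hcongr, intervalIntegral.integral_mul_const,
    integral_pow]
  have h1 : d - 1 + 1 = d := by omega
  have hd0 : ((d:ℝ)) ≠ 0 := by positivity
  rw [h1, zero_pow (by omega : d ≠ 0)]
  have : ((d - 1 : ℕ) : ℝ) + 1 = (d : ℝ) := by
    have : ((d - 1 : ℕ) : ℝ) = (d : ℝ) - 1 := by
      push_cast [Nat.cast_sub (by omega : 1 ≤ d)]; ring
    rw [this]; ring
  rw [this]
  field_simp
  ring

lemma F_ge {d : ℕ} (hd : 2 ≤ d) {r : ℝ} (hr : 1 ≤ r) :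
    ∫ t in (0:ℝ)..r, Ud d t * t =
      (r ^ d * Ksin d (Real.arcsin (1 / r)) + Real.sqrt (r ^ 2 - 1)) / (d * Real.pi) := by
  have hπ : (0:ℝ) < Real.pi := Real.pi_pos
  have hd0 : (0:ℝ) < (d:ℝ) := by positivity
  have hcont1 : ContinuousOn (fun t : ℝ => t ^ (d - 1) * (Ksin d (Real.pi / 2) / Real.pi))
      (Set.Icc 0 1) := (continuousOn_pow _).mul continuousOn_const
  have hi1 : IntervalIntegrable (fun t => Ud d t * t) MeasureTheory.volume 0 1 := by
    rw [intervalIntegrable_iff_integrableOn_Ioc_of_le zero_le_one]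
    apply MeasureTheory.IntegrableOn.congr_fun
      ((hcont1.integrableOn_Icc).mono_set Set.Ioc_subset_Icc_self) ?_ measurableSet_Ioc
    intro t htm
    simp only
    rw [Ud_of_le hd htm.1 htm.2,
      show t ^ (d - 2) * Ksin d (Real.pi / 2) / Real.pi * t
        = t ^ (d - 2) * t * (Ksin d (Real.pi / 2) / Real.pi) by ring, pow_sub_helper hd]
  have hg2cont : ContinuousOn (fun t : ℝ => t ^ (d - 1) * (Ksin d (Real.arcsin (1 / t)) / Real.pi))
      (Set.Icc 1 r) := by
    apply (continuousOn_pow _).mul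
    apply ContinuousOn.div_const
    apply (continuous_Ksin d).comp_continuousOn
    apply Real.continuous_arcsin.comp_continuousOn
    exact continuousOn_const.div continuousOn_id
      (fun x hx => ne_of_gt (lt_of_lt_of_le one_pos hx.1))
  have hi2 : IntervalIntegrable (fun t => Ud d t * t) MeasureTheory.volume 1 r := by
    rw [intervalIntegrable_iff_integrableOn_Ioc_of_le hr]
    apply MeasureTheory.IntegrableOn.congr_fun
      ((hg2cont.integrableOn_Icc).mono_set Set.Ioc_subset_Icc_self) ?_ measurableSet_Ioc
    intro t htm
    simp only
    rw [Ud_of_ge hd htm.1.le,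
      show t ^ (d - 2) * Ksin d (Real.arcsin (1 / t)) / Real.pi * t
        = t ^ (d - 2) * t * (Ksin d (Real.arcsin (1 / t)) / Real.pi) by ring, pow_sub_helper hd]
  rw [← intervalIntegral.integral_add_adjacent_intervals hi1 hi2]
  rw [F_le hd zero_le_one le_rfl]
  have hcongr2 : Set.EqOn (fun t => Ud d t * t)
      (fun t => t ^ (d - 1) * (Ksin d (Real.arcsin (1 / t)) / Real.pi)) (Set.uIcc 1 r) := by
    intro t htm
    rw [Set.uIcc_of_le hr] at htm
    simp only
    rw [Ud_of_ge hd htm.1,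
      show t ^ (d - 2) * Ksin d (Real.arcsin (1 / t)) / Real.pi * t
        = t ^ (d - 2) * t * (Ksin d (Real.arcsin (1 / t)) / Real.pi) by ring, pow_sub_helper hd]
  rw [intervalIntegral.integral_congr hcongr2]
  have hHcont : ContinuousOn
      (fun t : ℝ => (t ^ d * Ksin d (Real.arcsin (1 / t)) + Real.sqrt (t ^ 2 - 1)) / ((d:ℝ) * Real.pi))
      (Set.Icc 1 r) := by
    apply ContinuousOn.div_const
    apply ContinuousOn.add
    · apply (continuousOn_pow _).mul
      apply (continuous_Ksin d).comp_continuousOn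
      apply Real.continuous_arcsin.comp_continuousOn
      exact continuousOn_const.div continuousOn_id
        (fun x hx => ne_of_gt (lt_of_lt_of_le one_pos hx.1))
    · exact (Real.continuous_sqrt.comp (by continuity)).continuousOn
  have hderiv : ∀ x ∈ Set.Ioo 1 r,
      HasDerivWithinAt
        (fun t : ℝ => (t ^ d * Ksin d (Real.arcsin (1 / t)) + Real.sqrt (t ^ 2 - 1)) / ((d:ℝ) * Real.pi))
        (x ^ (d - 1) * (Ksin d (Real.arcsin (1 / x)) / Real.pi)) (Set.Ioi x) x := by
    intro x hx
    refine HasDerivAt.hasDerivWithinAt ?_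
    refine ((hasDerivAt_H hd hx.1).div_const ((d:ℝ) * Real.pi)).congr_deriv ?_
    field_simp
  have hint : IntervalIntegrable (fun t : ℝ => t ^ (d - 1) * (Ksin d (Real.arcsin (1 / t)) / Real.pi))
      MeasureTheory.volume 1 r := by
    rw [intervalIntegrable_iff_integrableOn_Ioc_of_le hr]
    exact (hg2cont.integrableOn_Icc).mono_set Set.Ioc_subset_Icc_self
  rw [intervalIntegral.integral_eq_sub_of_hasDeriv_right_of_le hr hHcont hderiv hint]
  rw [one_div_one, Real.arcsin_one]
  norm_num

lemma rpow_neg_nat {r : ℝ} (hr0 : 0 < r) (d : ℕ) : r ^ (-(d:ℝ)) = (r ^ d)⁻¹ := by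
  rw [Real.rpow_neg hr0.le, Real.rpow_natCast]

lemma Wd_of_le {d : ℕ} (hd : 2 ≤ d) {r : ℝ} (hr0 : 0 < r) (hr : r ≤ 1) :
    Wd d r = 2 / (Real.Gamma ((d : ℝ) - 1) * volSphere d) *
      (Ksin d (Real.pi / 2) / (d * Real.pi)) := by
  rw [Wd, F_le hd hr0.le hr, rpow_neg_nat hr0]
  have h0 : (r:ℝ) ^ d ≠ 0 := pow_ne_zero _ hr0.ne'
  have hcancel : ((r:ℝ) ^ d)⁻¹ * (r ^ d * Ksin d (Real.pi / 2) / ((d:ℝ) * Real.pi)) =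
      Ksin d (Real.pi / 2) / ((d:ℝ) * Real.pi) := by
    rw [← mul_div_assoc, ← mul_assoc, inv_mul_cancel₀ h0, one_mul]
  rw [mul_assoc, hcancel]


lemma Wd_of_ge {d : ℕ} (hd : 2 ≤ d) {r : ℝ} (hr : 1 ≤ r) :
    Wd d r = 2 / (Real.Gamma ((d : ℝ) - 1) * volSphere d) / ((d:ℝ) * Real.pi) *
      (Ksin d (Real.arcsin (1 / r)) + Real.sqrt (r ^ 2 - 1) / r ^ d) := by
  have hr0 : 0 < r := lt_of_lt_of_le one_pos hr
  rw [Wd, F_ge hd hr, rpow_neg_nat hr0]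
  have h1 : (r:ℝ) ^ d ≠ 0 := pow_ne_zero _ hr0.ne'
  have h2 : ((d:ℝ)) ≠ 0 := by positivity
  have h3 : Real.pi ≠ 0 := Real.pi_ne_zero
  field_simp

theorem Wd_const_and_strictAnti (d : ℕ) (hd : 2 ≤ d) :
    (∀ r ∈ Set.Ioc (0:ℝ) 1, ∀ s ∈ Set.Ioc (0:ℝ) 1, Wd d r = Wd d s) ∧
    StrictAntiOn (Wd d) (Set.Ici 1) := by
  constructor
  · intro r hr s hs
    rw [Wd_of_le hd hr.1 hr.2, Wd_of_le hd hs.1 hs.2]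
  · have hπ : (0:ℝ) < Real.pi := Real.pi_pos
    have hd0 : (0:ℝ) < (d:ℝ) := by positivity
    have hΓ1 : 0 < Real.Gamma ((d : ℝ) - 1) := by
      apply Real.Gamma_pos_of_pos
      have : (2:ℝ) ≤ (d:ℝ) := by exact_mod_cast hd
      linarith
    have hvol : 0 < volSphere d := by
      rw [volSphere]
      apply div_pos
      · positivity
      · apply Real.Gamma_pos_of_pos; positivity
    have hC : 0 < 2 / (Real.Gamma ((d : ℝ) - 1) * volSphere d) / ((d:ℝ) * Real.pi) := by
      positivity
    set G : ℝ → ℝ := fun r => Ksin d (Real.arcsin (1 / r)) + Real.sqrt (r ^ 2 - 1) / r ^ d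
      with hGdef
    have hGcont : ContinuousOn G (Set.Ici 1) := by
      apply ContinuousOn.add
      · apply (continuous_Ksin d).comp_continuousOn
        apply Real.continuous_arcsin.comp_continuousOn
        exact continuousOn_const.div continuousOn_id
          (fun x hx => ne_of_gt (lt_of_lt_of_le one_pos hx))
      · exact ((Real.continuous_sqrt.comp (by continuity)).continuousOn).div
          (continuousOn_pow d)
          (fun x hx => pow_ne_zero _ (ne_of_gt (lt_of_lt_of_le one_pos hx)))
    have hGanti : StrictAntiOn G (Set.Ici 1) := by
      apply strictAntiOn_of_deriv_neg (convex_Ici 1) hGcont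
      rw [interior_Ici]
      intro x hx
      have hx1 : 1 < x := hx
      have hx0 : 0 < x := lt_trans one_pos hx1
      have hs0 : 0 < Real.sqrt (x ^ 2 - 1) := Real.sqrt_pos.2 (by nlinarith)
      have hder : HasDerivAt G (-((d:ℝ) * Real.sqrt (x ^ 2 - 1) / x ^ (d + 1))) x := by
        have h1 := hasDerivAt_Ksin_arcsin_inv (d := d) hx1
        have h2 := (hasDerivAt_sqrt_sq_sub_one hx1).div (hasDerivAt_pow d x)
          (pow_ne_zero _ hx0.ne')
        have h := h1.add h2
        refine h.congr_deriv ?_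
        obtain ⟨k, rfl⟩ : ∃ k, d = k + 2 := ⟨d - 2, by omega⟩
        have hkk : k + 2 - 2 = k := rfl
        have hkk1 : k + 2 - 1 = k + 1 := rfl
        rw [hkk, hkk1]
        have hs2 : Real.sqrt (x ^ 2 - 1) ^ 2 = x ^ 2 - 1 := Real.sq_sqrt (by nlinarith)
        simp only [div_pow, one_pow]
        field_simp
        ring_nf
      rw [hder.deriv]
      apply neg_lt_zero.2
      apply div_pos (mul_pos hd0 hs0) (pow_pos hx0 _)
    intro x hx y hy hxy
    rw [Wd_of_ge hd hx, Wd_of_ge hd hy]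
    exact mul_lt_mul_of_pos_left (hGanti hx hy hxy) hC
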